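/- Let (Ω, μ) be a measure space with 0 < μ(Ω) < ∞, let k₀ > 0, b > 0, and let l, m be real numbers with l > 1 and 0 < m < l. Let u : Ω → ℝ be measurable with u ≥ 0 almost everywhere and u^l integrable, and set V = ∫_Ω u dμ. If k₀·V^{l-m}·μ(Ω)^{-(l-m)(l-1)/l} − b·μ(Ω)^{(l-m)/l} ≥ 1, then k₀·∫_Ω u^l dμ − b·∫_Ω u^m dμ ≥ μ(Ω)^{-m(l-1)/l} · V^m. -/

import Mathlib

open MeasureTheory

section Aux

variable {Ω : Type*} [MeasurableSpace Ω] {μ : Measure Ω}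

/-- Auxiliary Hölder step: for `0 < s < l`, `u ≥ 0` a.e., `u^l` integrable,
`∫ u^s ≤ (∫ u^l)^(s/l) * M^((l-s)/l)`. -/
lemma holder_step (hμfin : μ Set.univ < ⊤) {l s : ℝ} (hl0 : 0 < l) (hs : 0 < s) (hsl : s < l)
    {u : Ω → ℝ} (hu : Measurable u) (hu0 : ∀ᵐ x ∂μ, 0 ≤ u x)
    (hint : Integrable (fun x => u x ^ l) μ) :
    (∫ x, u x ^ s ∂μ) ≤ (∫ x, u x ^ l ∂μ) ^ (s / l) *
      (μ Set.univ).toReal ^ ((l - s) / l) := by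
  haveI : IsFiniteMeasure μ := ⟨hμfin⟩
  have hls : 0 < l - s := by linarith
  have hconj : Real.HolderConjugate (l / s) (l / (l - s)) := by
    rw [Real.holderConjugate_iff]
    constructor
    · rw [lt_div_iff₀ hs]; linarith
    · field_simp
      ring
  have hnorm : (fun x => ‖u x‖ ^ l) =ᵐ[μ] (fun x => u x ^ l) := by
    filter_upwards [hu0] with x hx
    rw [Real.norm_of_nonneg hx]
  have hul : MemLp u (ENNReal.ofReal l) μ := by
    have h1 : MemLp (fun x => ‖u x‖ ^ (ENNReal.ofReal l).toReal)
        (ENNReal.ofReal l / ENNReal.ofReal l) μ := by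
      rw [ENNReal.div_self (by simp [hl0]) (by simp), ENNReal.toReal_ofReal hl0.le,
        memLp_one_iff_integrable]
      exact hint.congr hnorm.symm
    exact (memLp_norm_rpow_iff hu.aestronglyMeasurable (by simp [hl0]) (by simp)).mp h1
  have hus : MemLp (fun x => u x ^ s) (ENNReal.ofReal (l / s)) μ := by
    have h2 := hul.norm_rpow_div (ENNReal.ofReal s)
    rw [ENNReal.toReal_ofReal hs.le, ← ENNReal.ofReal_div_of_pos hs] at h2
    refine h2.ae_eq ?_
    filter_upwards [hu0] with x hx
    rw [Real.norm_of_nonneg hx]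
  have h1 : MemLp (fun _ : Ω => (1 : ℝ)) (ENNReal.ofReal (l / (l - s))) μ := memLp_const 1
  have hH := integral_mul_le_Lp_mul_Lq_of_nonneg hconj
    (f := fun x => u x ^ s) (g := fun _ => (1 : ℝ))
    (hu0.mono fun x hx => Real.rpow_nonneg hx s)
    (Filter.Eventually.of_forall fun _ => zero_le_one) hus h1
  simp only [mul_one, Real.one_rpow, integral_const, smul_eq_mul] at hH
  have hA : (∫ x, (u x ^ s) ^ (l / s) ∂μ) = ∫ x, u x ^ l ∂μ := by
    refine integral_congr_ae ?_
    filter_upwards [hu0] with x hx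
    rw [← Real.rpow_mul hx, mul_div_cancel₀ _ hs.ne']
  rw [hA] at hH
  have he1 : 1 / (l / s) = s / l := by field_simp
  have he2 : 1 / (l / (l - s)) = (l - s) / l := by field_simp
  rw [he1, he2] at hH
  exact hH

end Aux

/-- Hölder chain (E10), case `l > max(m,1)`: on a finite measure space with
`0 < μ(Ω) < ∞`, `u ≥ 0` a.e. with `u^l` integrable, `V = ∫ u`, if
`k₀·V^(l−m)·μ(Ω)^(−(l−m)(l−1)/l) − b·μ(Ω)^((l−m)/l) ≥ 1`, then
`k₀·∫ u^l − b·∫ u^m ≥ μ(Ω)^(−m(l−1)/l)·V^m`. -/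
theorem stmt_9 {Ω : Type*} [MeasurableSpace Ω] (μ : Measure Ω)
    (hμ0 : 0 < μ Set.univ) (hμfin : μ Set.univ < ⊤)
    (k₀ b l m : ℝ) (hk₀ : 0 < k₀) (hb : 0 < b)
    (hl : 1 < l) (hm : 0 < m) (hml : m < l)
    (u : Ω → ℝ) (hu : Measurable u) (hu0 : ∀ᵐ x ∂μ, 0 ≤ u x)
    (hint : Integrable (fun x => u x ^ l) μ)
    (hJ : 1 ≤ k₀ * (∫ x, u x ∂μ) ^ (l - m) *
            (μ Set.univ).toReal ^ (-((l - m) * (l - 1) / l)) -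
          b * (μ Set.univ).toReal ^ ((l - m) / l)) :
    (μ Set.univ).toReal ^ (-(m * (l - 1) / l)) * (∫ x, u x ∂μ) ^ m ≤
      k₀ * (∫ x, u x ^ l ∂μ) - b * (∫ x, u x ^ m ∂μ) := by
  set M : ℝ := (μ Set.univ).toReal with hMdef
  have hM : 0 < M := ENNReal.toReal_pos hμ0.ne' hμfin.ne
  set V : ℝ := ∫ x, u x ∂μ with hVdef
  set A : ℝ := ∫ x, u x ^ l ∂μ with hAdef
  set B : ℝ := ∫ x, u x ^ m ∂μ with hBdef
  have hl0 : (0:ℝ) < l := by linarith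
  have hlm : (0:ℝ) < l - m := by linarith
  -- V > 0 (else hJ is contradictory)
  have hV0 : 0 ≤ V := integral_nonneg_of_ae hu0
  have hV : 0 < V := by
    rcases hV0.lt_or_eq with h | h
    · exact h
    · exfalso
      rw [← h, Real.zero_rpow hlm.ne', mul_zero, zero_mul, zero_sub] at hJ
      have : 0 < b * M ^ ((l - m) / l) := by positivity
      linarith
  -- Fact 2: V ≤ A^(1/l) * M^((l-1)/l)
  have hfact2 : V ≤ A ^ (1 / l) * M ^ ((l - 1) / l) := by
    have h := holder_step hμfin hl0 one_pos hl hu hu0 hint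
    simpa [Real.rpow_one] using h
  -- Fact 1: B ≤ A^(m/l) * M^((l-m)/l)
  have hfact1 : B ≤ A ^ (m / l) * M ^ ((l - m) / l) :=
    holder_step hμfin hl0 hm hml hu hu0 hint
  have hA0 : 0 ≤ A := integral_nonneg_of_ae (hu0.mono fun x hx => Real.rpow_nonneg hx l)
  set a : ℝ := A ^ (1 / l) with hadef
  have ha0 : 0 ≤ a := Real.rpow_nonneg hA0 _
  set c : ℝ := V * M ^ (-((l - 1) / l)) with hcdef
  have hc : 0 < c := by positivity
  have hca : c ≤ a := by
    show V * M ^ (-((l - 1) / l)) ≤ a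
    calc V * M ^ (-((l - 1) / l))
        ≤ (a * M ^ ((l - 1) / l)) * M ^ (-((l - 1) / l)) :=
          mul_le_mul_of_nonneg_right hfact2 (Real.rpow_nonneg hM.le _)
      _ = a := by
          rw [mul_assoc, ← Real.rpow_add hM]
          simp
  have ha : 0 < a := hc.trans_le hca
  -- A = a ^ l,  A^(m/l) = a^m
  have hAa : A = a ^ l := by
    rw [hadef, ← Real.rpow_mul hA0, one_div, inv_mul_cancel₀ hl0.ne', Real.rpow_one]
  have hAm : A ^ (m / l) = a ^ m := by
    rw [hadef, ← Real.rpow_mul hA0]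
    congr 1
    field_simp
  -- c ^ t = V^t * M^(-(l-1)*t/l)
  have hct : ∀ t : ℝ, c ^ t = V ^ t * M ^ (-((l - 1) * t / l)) := by
    intro t
    rw [hcdef, Real.mul_rpow hV.le (by positivity), ← Real.rpow_mul hM.le]
    congr 1
    ring
  -- bracket ≥ 1
  have hbr : 1 ≤ k₀ * a ^ (l - m) - b * M ^ ((l - m) / l) := by
    have h1 : c ^ (l - m) ≤ a ^ (l - m) := Real.rpow_le_rpow hc.le hca hlm.le
    have h2 : c ^ (l - m) = V ^ (l - m) * M ^ (-((l - m) * (l - 1) / l)) := by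
      rw [hct (l - m)]
      congr 2
      ring
    calc (1:ℝ) ≤ k₀ * V ^ (l - m) * M ^ (-((l - m) * (l - 1) / l)) - b * M ^ ((l - m) / l) := hJ
      _ = k₀ * c ^ (l - m) - b * M ^ ((l - m) / l) := by rw [h2]; ring
      _ ≤ k₀ * a ^ (l - m) - b * M ^ ((l - m) / l) := by nlinarith
  -- main chain
  have hgoal : M ^ (-(m * (l - 1) / l)) * V ^ m ≤ k₀ * A - b * B :=
    calc M ^ (-(m * (l - 1) / l)) * V ^ m = c ^ m := by
          rw [hct m]
          rw [mul_comm]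
          congr 2
          ring
      _ ≤ a ^ m := Real.rpow_le_rpow hc.le hca hm.le
      _ = a ^ m * 1 := (mul_one _).symm
      _ ≤ a ^ m * (k₀ * a ^ (l - m) - b * M ^ ((l - m) / l)) := by
          apply mul_le_mul_of_nonneg_left hbr (by positivity)
      _ = k₀ * (a ^ m * a ^ (l - m)) - b * (a ^ m * M ^ ((l - m) / l)) := by ring
      _ = k₀ * a ^ l - b * (a ^ m * M ^ ((l - m) / l)) := by
          rw [← Real.rpow_add ha]
          ring_nf
      _ ≤ k₀ * A - b * B := by
          rw [hAa]
          have : B ≤ a ^ m * M ^ ((l - m) / l) := by rw [← hAm]; exact hfact1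
          nlinarith
  exact hgoal
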